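/- Suppose g acts on {0,1}^n by a permutation π of indices (g(x)_k = x_{π(k)}) and g is a symmetry of the binary deletion channel in the sense that for some bijection h of output strings, h(BDC_d(g x)) =_d BDC_d(x) for all x and some d ∈ (0,1). Then π preserves adjacency: for all i ≠ j, |i − j| = 1 iff |π(i) − π(j)| = 1. Consequently, g is either the identity or the reversal map. (Key step: if π fails adjacency-preservation, there is a string x = 1^{i+1} 0^{n−i−1} such that the number of distinct subsequences of g(x) strictly exceeds that of x, contradicting that any output bijection h must preserve support size.) -/

import Mathlib

/-- Transition probabilities of the binary deletion channel `BDC_p`. -/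
noncomputable def bdcProb (p : ℝ) : List Bool → List Bool → ℝ
  | [], [] => 1
  | [], _ :: _ => 0
  | _ :: xs, [] => p * bdcProb p xs []
  | b :: xs, c :: ys =>
      p * bdcProb p xs (c :: ys) + (1 - p) * (if c = b then bdcProb p xs ys else 0)

lemma bdc_nonneg (p : ℝ) (hp0 : 0 ≤ p) (hp1 : p ≤ 1) :
    ∀ x y : List Bool, 0 ≤ bdcProb p x y := by
  intro x
  induction x with
  | nil => intro y; cases y <;> simp [bdcProb]
  | cons b xs ih =>
    intro y
    cases y with
    | nil =>
      simpa [bdcProb] using mul_nonneg hp0 (ih [])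
    | cons c ys =>
      have h1 := ih (c :: ys)
      have h2 := ih ys
      simp only [bdcProb]
      have hif : 0 ≤ (if c = b then bdcProb p xs ys else 0) := by
        split <;> [exact h2; exact le_rfl]
      exact add_nonneg (mul_nonneg hp0 h1) (mul_nonneg (by linarith) hif)

lemma bdc_pos_iff (p : ℝ) (hp0 : 0 < p) (hp1 : p < 1) :
    ∀ x y : List Bool, (0 < bdcProb p x y ↔ y.Sublist x) := by
  intro x
  induction x with
  | nil =>
    intro y; cases y <;> simp [bdcProb]
  | cons b xs ih =>
    intro y
    cases y with
    | nil =>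
      constructor
      · intro _; exact List.nil_sublist _
      · intro _
        simp only [bdcProb]
        exact mul_pos hp0 ((ih []).mpr (List.nil_sublist _))
    | cons c ys =>
      have hA : 0 ≤ p * bdcProb p xs (c :: ys) :=
        mul_nonneg hp0.le (bdc_nonneg p hp0.le hp1.le _ _)
      have hif : 0 ≤ (if c = b then bdcProb p xs ys else 0) := by
        split <;> [exact bdc_nonneg p hp0.le hp1.le _ _; exact le_rfl]
      have hB : 0 ≤ (1 - p) * (if c = b then bdcProb p xs ys else 0) :=
        mul_nonneg (by linarith) hif
      simp only [bdcProb]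
      constructor
      · intro hpos
        have hor : 0 < p * bdcProb p xs (c :: ys) ∨
            0 < (1 - p) * (if c = b then bdcProb p xs ys else 0) := by
          by_contra hc
          push_neg at hc
          have := hc.1; have := hc.2
          linarith
        rcases hor with hA' | hB'
        · have hX : 0 < bdcProb p xs (c :: ys) := by
            rcases (bdc_nonneg p hp0.le hp1.le xs (c :: ys)).lt_or_eq with hlt | heq
            · exact hlt
            · exfalso; rw [← heq] at hA'; simp at hA'
          exact ((ih (c :: ys)).mp hX).cons b
        · by_cases hcb : c = b
          · rw [if_pos hcb] at hB'
            have hX : 0 < bdcProb p xs ys := by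
              rcases (bdc_nonneg p hp0.le hp1.le xs ys).lt_or_eq with hlt | heq
              · exact hlt
              · exfalso; rw [← heq] at hB'; simp at hB'
            subst hcb
            exact ((ih ys).mp hX).cons₂ c
          · rw [if_neg hcb] at hB'; simp at hB'
      · intro hs
        cases hs with
        | cons _ hsub =>
          have := (ih (c :: ys)).mpr hsub
          have : 0 < p * bdcProb p xs (c :: ys) := mul_pos hp0 this
          linarith
        | cons_cons _ hsub =>
          have := (ih ys).mpr hsub
          have hpos : 0 < (1 - p) * (if b = b then bdcProb p xs ys else 0) := by
            rw [if_pos rfl]; exact mul_pos (by linarith) this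
          linarith

lemma exists_sublist_counts :
    ∀ (l : List Bool) (i j : ℕ), i ≤ l.count true → j ≤ l.count false →
      ∃ y : List Bool, y.Sublist l ∧ y.count true = i ∧ y.count false = j := by
  intro l
  induction l with
  | nil =>
    intro i j hi hj
    simp only [List.count_nil, Nat.le_zero] at hi hj
    exact ⟨[], List.nil_sublist _, by simp [hi, hj]⟩
  | cons b t ih =>
    intro i j hi hj
    cases b with
    | true =>
      have hct : (true :: t).count true = t.count true + 1 := by simp
      have hcf : (true :: t).count false = t.count false := by simp
      rw [hct] at hi; rw [hcf] at hj
      cases i with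
      | zero =>
        obtain ⟨y, hy, h1, h2⟩ := ih 0 j (Nat.zero_le _) hj
        exact ⟨y, hy.cons _, h1, h2⟩
      | succ i =>
        obtain ⟨y, hy, h1, h2⟩ := ih i j (by omega) hj
        exact ⟨true :: y, hy.cons₂ _, by simp [h1], by simp [h2]⟩
    | false =>
      have hct : (false :: t).count true = t.count true := by simp
      have hcf : (false :: t).count false = t.count false + 1 := by simp
      rw [hct] at hi; rw [hcf] at hj
      cases j with
      | zero =>
        obtain ⟨y, hy, h1, h2⟩ := ih i 0 hi (Nat.zero_le _)
        exact ⟨y, hy.cons _, h1, h2⟩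
      | succ j =>
        obtain ⟨y, hy, h1, h2⟩ := ih i j hi (by omega)
        exact ⟨false :: y, hy.cons₂ _, by simp [h1], by simp [h2]⟩

lemma counts_image_subset (l : List Bool) :
    (Finset.range (l.count true + 1) ×ˢ Finset.range (l.count false + 1)) ⊆
      l.sublists.toFinset.image (fun y => (y.count true, y.count false)) := by
  classical
  intro p hp
  simp only [Finset.mem_product, Finset.mem_range] at hp
  obtain ⟨y, hy, h1, h2⟩ := exists_sublist_counts l p.1 p.2 (by omega) (by omega)
  refine Finset.mem_image.mpr ⟨y, ?_, ?_⟩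
  · rw [List.mem_toFinset, List.mem_sublists]; exact hy
  · simp [h1, h2]

lemma sublists_card_lower (l : List Bool) :
    (l.count true + 1) * (l.count false + 1) ≤ l.sublists.toFinset.card := by
  classical
  calc (l.count true + 1) * (l.count false + 1)
      = (Finset.range (l.count true + 1) ×ˢ Finset.range (l.count false + 1)).card := by
        simp [Finset.card_product]
    _ ≤ (l.sublists.toFinset.image (fun y => (y.count true, y.count false))).card :=
        Finset.card_le_card (counts_image_subset l)
    _ ≤ l.sublists.toFinset.card := Finset.card_image_le

lemma sublists_card_strict (l : List Bool)
    (h1 : [false, true].Sublist l) (h2 : [true, false].Sublist l) :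
    (l.count true + 1) * (l.count false + 1) < l.sublists.toFinset.card := by
  classical
  rcases lt_or_eq_of_le (sublists_card_lower l) with hlt | heq
  · exact hlt
  exfalso
  set S := l.sublists.toFinset with hS
  set f : List Bool → ℕ × ℕ := fun y => (y.count true, y.count false) with hf
  have hcardim : (S.image f).card = S.card := by
    have hle1 : (S.image f).card ≤ S.card := Finset.card_image_le
    have hle2 : S.card ≤ (S.image f).card := by
      rw [← heq]
      calc (l.count true + 1) * (l.count false + 1)
          = (Finset.range (l.count true + 1) ×ˢ Finset.range (l.count false + 1)).card := by
            simp [Finset.card_product]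
        _ ≤ (S.image f).card := Finset.card_le_card (counts_image_subset l)
    omega
  have hinj : Set.InjOn f S := Finset.injOn_of_card_image_eq hcardim
  have hm1 : [false, true] ∈ (S : Set (List Bool)) := by
    simp only [hS, Finset.coe_sort_coe, Finset.mem_coe, List.mem_toFinset, List.mem_sublists]
    exact h1
  have hm2 : [true, false] ∈ (S : Set (List Bool)) := by
    simp only [hS, Finset.coe_sort_coe, Finset.mem_coe, List.mem_toFinset, List.mem_sublists]
    exact h2
  have : ([false, true] : List Bool) = [true, false] := hinj hm1 hm2 (by simp [hf])
  simp at this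

lemma eq_mono_of_not_ft (l : List Bool) (hl : ¬ ([false, true].Sublist l)) :
    l = List.replicate (l.count true) true ++ List.replicate (l.count false) false := by
  induction l with
  | nil => simp
  | cons b t ih =>
    cases b with
    | true =>
      have h' : ¬ ([false, true].Sublist t) := fun hs => hl (hs.cons _)
      have hc1 : (true :: t).count true = t.count true + 1 := by simp
      have hc2 : (true :: t).count false = t.count false := by simp
      rw [hc1, hc2, List.replicate_succ, List.cons_append]
      exact congrArg (List.cons true) (ih h')
    | false =>
      have hmem : ∀ x ∈ (false :: t), x = false := by
        intro x hx
        rcases List.mem_cons.mp hx with h | h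
        · exact h
        · cases x with
          | false => rfl
          | true =>
            exact absurd ((List.singleton_sublist.mpr h).cons₂ false) hl
      have hrep : (false :: t) = List.replicate (false :: t).length false :=
        List.eq_replicate_of_mem hmem
      rw [hrep]
      simp [List.count_replicate]

lemma eq_mono_of_not_tf (l : List Bool) (hl : ¬ ([true, false].Sublist l)) :
    l = List.replicate (l.count false) false ++ List.replicate (l.count true) true := by
  induction l with
  | nil => simp
  | cons b t ih =>
    cases b with
    | false =>
      have h' : ¬ ([true, false].Sublist t) := fun hs => hl (hs.cons _)
      have hc1 : (false :: t).count false = t.count false + 1 := by simp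
      have hc2 : (false :: t).count true = t.count true := by simp
      rw [hc1, hc2, List.replicate_succ, List.cons_append]
      exact congrArg (List.cons false) (ih h')
    | true =>
      have hmem : ∀ x ∈ (true :: t), x = true := by
        intro x hx
        rcases List.mem_cons.mp hx with h | h
        · exact h
        · cases x with
          | true => rfl
          | false =>
            exact absurd ((List.singleton_sublist.mpr h).cons₂ true) hl
      have hrep : (true :: t) = List.replicate (true :: t).length true :=
        List.eq_replicate_of_mem hmem
      rw [hrep]
      simp [List.count_replicate]

lemma sublists_card_mono (a b : ℕ) :
    ((List.replicate a true ++ List.replicate b false).sublists.toFinset).card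
      = (a + 1) * (b + 1) := by
  classical
  set l := List.replicate a true ++ List.replicate b false with hl
  have hform : ∀ y : List Bool, y.Sublist l →
      y = List.replicate (y.count true) true ++ List.replicate (y.count false) false ∧
      y.count true ≤ a ∧ y.count false ≤ b := by
    intro y hy
    rw [hl] at hy
    obtain ⟨y1, y2, rfl, h1, h2⟩ := List.sublist_append_iff.mp hy
    obtain ⟨i, hi, rfl⟩ := List.sublist_replicate_iff.mp h1
    obtain ⟨j, hj, rfl⟩ := List.sublist_replicate_iff.mp h2
    refine ⟨?_, ?_, ?_⟩ <;>
      simp [List.count_append, List.count_replicate, hi, hj]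
  apply le_antisymm
  · have hsub : l.sublists.toFinset ⊆
        (Finset.range (a + 1) ×ˢ Finset.range (b + 1)).image
          (fun p : ℕ × ℕ => List.replicate p.1 true ++ List.replicate p.2 false) := by
      intro y hy
      have hy' : y.Sublist l := List.mem_sublists.mp (List.mem_toFinset.mp hy)
      obtain ⟨hform', h1, h2⟩ := hform y hy'
      refine Finset.mem_image.mpr ⟨(y.count true, y.count false), ?_, hform'.symm⟩
      simp only [Finset.mem_product, Finset.mem_range]
      omega
    calc l.sublists.toFinset.card
        ≤ _ := Finset.card_le_card hsub
      _ ≤ (Finset.range (a + 1) ×ˢ Finset.range (b + 1)).card := Finset.card_image_le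
      _ = (a + 1) * (b + 1) := by simp [Finset.card_product]
  · have hlow := sublists_card_lower l
    have hc1 : l.count true = a := by
      simp [hl, List.count_append, List.count_replicate]
    have hc2 : l.count false = b := by
      simp [hl, List.count_append, List.count_replicate]
    rw [hc1, hc2] at hlow
    exact hlow

lemma ofFn_decide_lt (n a : ℕ) (ha : a ≤ n) :
    List.ofFn (fun k : Fin n => decide (k.val < a))
      = List.replicate a true ++ List.replicate (n - a) false := by
  apply List.ext_getElem
  · simp; omega
  · intro k hk1 hk2
    simp only [List.getElem_ofFn]
    by_cases hk : k < a
    · rw [List.getElem_append_left (by simpa using hk)]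
      simp [hk]
    · rw [List.getElem_append_right (by simpa using (not_lt.mp hk))]
      simp [hk]

lemma ofFn_decide_ge (n b : ℕ) (hb : b ≤ n) :
    List.ofFn (fun k : Fin n => decide (b ≤ k.val))
      = List.replicate b false ++ List.replicate (n - b) true := by
  apply List.ext_getElem
  · simp; omega
  · intro k hk1 hk2
    simp only [List.getElem_ofFn]
    by_cases hk : k < b
    · rw [List.getElem_append_left (by simpa using hk)]
      simp; omega
    · rw [List.getElem_append_right (by simpa using (not_lt.mp hk))]
      simp; omega

lemma count_ofFn_comp (n : ℕ) (π : Equiv.Perm (Fin n)) (x : Fin n → Bool) (c : Bool) :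
    (List.ofFn (x ∘ π)).count c = (List.ofFn x).count c :=
  (π.ofFn_comp_perm x).count_eq c

/-- Suppose `g` acts on `{0,1}^n` by a permutation `π` of the indices,
`g(x)_k = x_{π k}`, and `g` is a symmetry of `BDC_d` for some `d ∈ (0,1)`:
there is a bijection `h` of output strings with `h (BDC_d (g x))` equal in
distribution to `BDC_d x` for all `x`. Then `π` preserves adjacency
(`|i − j| = 1` iff `|π i − π j| = 1` for `i ≠ j`); consequently `g` is either
the identity or the reversal map. -/
theorem bdc_perm_symmetries_are_trivial (n : ℕ) (d : ℝ) (hd0 : 0 < d) (hd1 : d < 1)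
    (π : Equiv.Perm (Fin n))
    (h : Equiv (List Bool) (List Bool))
    (hsym : ∀ (x : Fin n → Bool) (y : List Bool),
      bdcProb d (List.ofFn (x ∘ π)) (h.symm y) = bdcProb d (List.ofFn x) y) :
    (∀ i j : Fin n, i ≠ j →
      ((j.val = i.val + 1 ∨ i.val = j.val + 1) ↔
        ((π j).val = (π i).val + 1 ∨ (π i).val = (π j).val + 1))) ∧
    (π = Equiv.refl (Fin n) ∨ π = Fin.revPerm) := by
  classical
  have hmem : ∀ (x : Fin n → Bool) (y : List Bool),
      y.Sublist (List.ofFn x) ↔ (h.symm y).Sublist (List.ofFn (x ∘ π)) := by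
    intro x y
    rw [← bdc_pos_iff d hd0 hd1 (List.ofFn x) y,
        ← bdc_pos_iff d hd0 hd1 (List.ofFn (x ∘ π)) (h.symm y), hsym x y]
  have hsupp : ∀ x : Fin n → Bool,
      ((List.ofFn (x ∘ π)).sublists.toFinset).card
        = ((List.ofFn x).sublists.toFinset).card := by
    intro x
    apply Finset.card_bij' (i := fun y _ => h y) (j := fun y _ => h.symm y)
    · intro z hz
      rw [List.mem_toFinset, List.mem_sublists]
      rw [List.mem_toFinset, List.mem_sublists] at hz
      exact (hmem x (h z)).mpr (by simpa using hz)
    · intro y hy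
      rw [List.mem_toFinset, List.mem_sublists]
      rw [List.mem_toFinset, List.mem_sublists] at hy
      exact (hmem x y).mp hy
    · intro z _; simp
    · intro y _; simp
  have key : ∀ a : ℕ, 1 ≤ a → a < n →
      (∀ k : Fin n, ((π k).val < a ↔ k.val < a)) ∨
      (∀ k : Fin n, ((π k).val < a ↔ n - a ≤ k.val)) := by
    intro a ha1 ha2
    set x : Fin n → Bool := fun k => decide (k.val < a) with hx
    have hofn : List.ofFn x = List.replicate a true ++ List.replicate (n - a) false :=
      ofFn_decide_lt n a ha2.le
    have hcount_t : (List.ofFn (x ∘ π)).count true = a := by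
      rw [count_ofFn_comp, hofn]
      simp [List.count_append, List.count_replicate]
    have hcount_f : (List.ofFn (x ∘ π)).count false = n - a := by
      rw [count_ofFn_comp, hofn]
      simp [List.count_append, List.count_replicate]
    have hcard : ((List.ofFn (x ∘ π)).sublists.toFinset).card = (a + 1) * ((n - a) + 1) := by
      rw [hsupp x, hofn, sublists_card_mono]
    have hnotboth : ¬ ([false, true].Sublist (List.ofFn (x ∘ π))) ∨
        ¬ ([true, false].Sublist (List.ofFn (x ∘ π))) := by
      by_contra hc
      push_neg at hc
      have := sublists_card_strict _ hc.1 hc.2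
      rw [hcount_t, hcount_f, hcard] at this
      exact lt_irrefl _ this
    rcases hnotboth with hft | htf
    · left
      have heql := eq_mono_of_not_ft _ hft
      rw [hcount_t, hcount_f, ← hofn] at heql
      have heq := List.ofFn_inj.mp heql
      intro k
      have hk := congrFun heq k
      simp only [Function.comp_apply, hx] at hk
      exact decide_eq_decide.mp hk
    · right
      have heql := eq_mono_of_not_tf _ htf
      have hge : List.ofFn (fun k : Fin n => decide (n - a ≤ k.val))
          = List.replicate (n - a) false ++ List.replicate a true := by
        rw [ofFn_decide_ge n (n - a) (by omega)]
        congr 2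
        omega
      rw [hcount_t, hcount_f, ← hge] at heql
      have heq := List.ofFn_inj.mp heql
      intro k
      have hk := congrFun heq k
      simp only [Function.comp_apply, hx] at hk
      exact decide_eq_decide.mp hk
  have hconc : π = Equiv.refl (Fin n) ∨ π = Fin.revPerm := by
    rcases le_or_gt n 1 with hn | hn
    · left
      apply Equiv.ext
      intro k
      have h1 := k.isLt
      have h2 := (π k).isLt
      exact Fin.ext (by simp; omega)
    · -- n ≥ 2
      have k0 : Fin n := ⟨0, by omega⟩
      have hkey1 := key 1 le_rfl (by omega)
      rcases hkey1 with hP | hQ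
      · left
        have hPa : ∀ a : ℕ, 1 ≤ a → a < n →
            ∀ k : Fin n, ((π k).val < a ↔ k.val < a) := by
          intro a ha1 ha2
          rcases key a ha1 ha2 with hgood | hbad
          · exact hgood
          · exfalso
            have h0 : (π ⟨0, by omega⟩ : Fin n).val < 1 :=
              (hP ⟨0, by omega⟩).mpr (by simp)
            have h1 := (hbad ⟨0, by omega⟩).mp (by omega)
            simp at h1
            omega
        apply Equiv.ext
        intro k
        have hk1 : (π k).val ≤ k.val := by
          by_cases hkn : k.val + 1 < n
          · have := (hPa (k.val + 1) (by omega) hkn k).mpr (by omega)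
            omega
          · have := (π k).isLt
            have := k.isLt
            omega
        have hk2 : k.val ≤ (π k).val := by
          by_cases hkn : (π k).val + 1 < n
          · have := (hPa ((π k).val + 1) (by omega) hkn k).mp (by omega)
            omega
          · have := (π k).isLt
            have := k.isLt
            omega
        exact Fin.ext (by simp; omega)
      · right
        have hQa : ∀ a : ℕ, 1 ≤ a → a < n →
            ∀ k : Fin n, ((π k).val < a ↔ n - a ≤ k.val) := by
          intro a ha1 ha2
          rcases key a ha1 ha2 with hbad | hgood
          · exfalso
            have h0 : (π ⟨n - 1, by omega⟩ : Fin n).val < 1 :=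
              (hQ ⟨n - 1, by omega⟩).mpr (by simp)
            have h1 := (hbad ⟨n - 1, by omega⟩).mp (by omega)
            simp at h1
            omega
          · exact hgood
        apply Equiv.ext
        intro k
        have hk := k.isLt
        have hπk := (π k).isLt
        have hq1 : (π k).val ≤ n - 1 - k.val := by
          rcases Nat.eq_zero_or_pos k.val with h0 | h0
          · omega
          · have hh := (hQa (n - k.val) (by omega) (by omega) k).mpr (by omega)
            omega
        have hq2 : n - 1 - k.val ≤ (π k).val := by
          rcases le_or_gt (n - 1) k.val with h0 | h0
          · omega
          · have hh := hQa (n - k.val - 1) (by omega) (by omega) k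
            have hnot : ¬ ((π k).val < n - k.val - 1) := by
              intro hcc
              have := hh.mp hcc
              omega
            omega
        have hrev : (Fin.revPerm k : Fin n).val = n - 1 - k.val := by
          simp [Fin.revPerm]
          omega
        exact Fin.ext (by omega)
  refine ⟨?_, hconc⟩
  intro i j hij
  have hi := i.isLt
  have hj := j.isLt
  have hne : i.val ≠ j.val := fun hc => hij (Fin.ext hc)
  rcases hconc with rfl | rfl
  · simp
  · have hri : (Fin.revPerm i : Fin n).val = n - 1 - i.val := by
      simp [Fin.revPerm]; omega
    have hrj : (Fin.revPerm j : Fin n).val = n - 1 - j.val := by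
      simp [Fin.revPerm]; omega
    rw [hri, hrj]
    omega
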